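/- In the vacuous imprecise probability tree, where Q(h|s) = max h for every situation s and every gamble h on the finite state space X, the game-theoretic upper expectation satisfies E_V(f) = sup f for every extended real variable f on the path space. -/
import Mathlib


open Filter

/-- prefix of length `n` of a path -/
def pref {X : Type*} (ω : ℕ → X) (n : ℕ) : List X := (List.range n).map ω

/-- process difference -/
def pdiff {X : Type*} (M : List X → ℝ) (s : List X) : X → ℝ := fun x => M (s ++ [x]) - M s

/-- process multiplier -/
noncomputable def pmul {X : Type*} (M : List X → ℝ) (s : List X) : X → ℝ :=
  fun x => M (s ++ [x]) / M s

/-- family of coherent upper expectations (local models of an imprecise probability tree) -/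
def Coherent {X : Type*} (Q : List X → (X → ℝ) → ℝ) : Prop :=
  ∀ s : List X,
    (∀ h : X → ℝ, Q s h ≤ ⨆ x, h x) ∧
    (∀ h g : X → ℝ, Q s (h + g) ≤ Q s h + Q s g) ∧
    (∀ (h : X → ℝ) (c : ℝ), 0 ≤ c → Q s (c • h) = c * Q s h)

/-- supermartingale for the tree with local models `Q` -/
def IsSupermart {X : Type*} (Q : List X → (X → ℝ) → ℝ) (M : List X → ℝ) : Prop :=
  ∀ s : List X, Q s (pdiff M s) ≤ 0

/-- bounded below process -/
def BddBelowProc {X : Type*} (M : List X → ℝ) : Prop := ∃ C : ℝ, ∀ s : List X, C ≤ M s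

/-- test supermartingale: nonnegative supermartingale with initial value 1 -/
def IsTestSupermart {X : Type*} (Q : List X → (X → ℝ) → ℝ) (M : List X → ℝ) : Prop :=
  IsSupermart Q M ∧ (∀ s : List X, 0 ≤ M s) ∧ M [] = 1

/-- game-theoretic upper expectation conditional on a situation `s` -/
noncomputable def EV {X : Type*} (Q : List X → (X → ℝ) → ℝ) (f : (ℕ → X) → EReal)
    (s : List X) : EReal :=
  sInf { y : EReal | ∃ M : List X → ℝ, IsSupermart Q M ∧ BddBelowProc M ∧
    (∀ ω : ℕ → X, pref ω s.length = s →
      f ω ≤ Filter.liminf (fun n => ((M (pref ω n) : ℝ) : EReal)) Filter.atTop) ∧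
    y = ((M s : ℝ) : EReal) }

lemma pref_succ {X : Type*} (ω : ℕ → X) (n : ℕ) :
    pref ω (n + 1) = pref ω n ++ [ω n] := by
  simp [pref, List.range_succ]

theorem vacuous_EV_eq_sup {X : Type*} [Fintype X] [Nonempty X]
    (Q : List X → (X → ℝ) → ℝ) (hQ : ∀ (s : List X) (h : X → ℝ), Q s h = ⨆ x, h x)
    (f : (ℕ → X) → EReal) :
    EV Q f [] = ⨆ ω : ℕ → X, f ω := by
  apply le_antisymm
  · -- EV ≤ sup f : it suffices to show EV ≤ c for every real c ≥ sup f
    have key : ∀ c : ℝ, (⨆ ω : ℕ → X, f ω) ≤ (c : EReal) → EV Q f [] ≤ (c : EReal) := by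
      intro c hc
      apply sInf_le
      refine ⟨fun _ => c, ?_, ⟨c, fun _ => le_rfl⟩, ?_, rfl⟩
      · intro s
        rw [hQ]
        have : pdiff (fun _ => c) s = fun _ : X => (0 : ℝ) := by
          funext x; simp [pdiff]
        rw [this, ciSup_const]
      · intro ω _
        have h : Filter.liminf (fun _ : ℕ => ((c : ℝ) : EReal)) Filter.atTop = (c : EReal) :=
          Filter.liminf_const _
        rw [h]
        exact (le_iSup _ ω).trans hc
    by_cases htop : (⨆ ω : ℕ → X, f ω) = ⊤
    · rw [htop]; exact le_top
    by_contra hlt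
    push_neg at hlt
    obtain ⟨c, hc1, hc2⟩ := EReal.exists_between_coe_real hlt
    exact absurd (key c hc1.le) (not_le.mpr hc2)
  · -- sup f ≤ EV : every admissible M satisfies f ω ≤ M []
    apply le_sInf
    rintro y ⟨M, hM, _, hf, rfl⟩
    apply iSup_le
    intro ω
    refine (hf ω rfl).trans ?_
    have hmono : ∀ n, M (pref ω n) ≤ M [] := by
      intro n
      induction n with
      | zero => simp [pref]
      | succ n ih =>
        refine le_trans ?_ ih
        rw [pref_succ]
        have h1 := hM (pref ω n)
        rw [hQ] at h1
        have h2 : pdiff M (pref ω n) (ω n) ≤ ⨆ x, pdiff M (pref ω n) x :=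
          le_ciSup (Set.Finite.bddAbove (Set.finite_range _)) (ω n)
        have := h2.trans h1
        simpa [pdiff, sub_nonpos] using this
    have : ∀ n, ((M (pref ω n) : ℝ) : EReal) ≤ ((M [] : ℝ) : EReal) := by
      intro n; exact_mod_cast hmono n
    exact liminf_le_of_frequently_le (Frequently.of_forall this)
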